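/- Let M be a topological space and φ : ℝ → M → M a 2π-periodic flow on M. Let f : M → ℝ be such that for every p ∈ M the map t ↦ f (φ t p) is continuous. Then for every p ∈ M the map s ↦ S(f)(φ s p) is differentiable at s = 0 with derivative f(p) − ⟨f⟩(p), where S(f)(p) = (1/(2π)) ∫₀^{2π} (t − π) f (φ t p) dt and ⟨f⟩(p) = (1/(2π)) ∫₀^{2π} f (φ t p) dt. (In Lie-derivative notation: L_Υ ∘ S applied to f equals f − ⟨f⟩, where Υ is the generator of the S¹-action.) -/

import Mathlib

open Real

/-- `L_Υ ∘ S = id − ⟨·⟩`: the derivative at `s = 0` of `s ↦ S(f)(φ s p)` equals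
`f p − ⟨f⟩ p` for a 2π-periodic flow. -/
theorem hasDerivAt_S_operator
    {M : Type*} [TopologicalSpace M] (φ : ℝ → M → M)
    (h0 : ∀ p : M, φ 0 p = p)
    (hadd : ∀ s t : ℝ, ∀ p : M, φ (s + t) p = φ s (φ t p))
    (hper : ∀ t : ℝ, ∀ p : M, φ (t + 2 * π) p = φ t p)
    (f : M → ℝ) (hf : ∀ p : M, Continuous fun t : ℝ => f (φ t p))
    (p : M) :
    HasDerivAt
      (fun s : ℝ => (1 / (2 * π)) * ∫ t in (0:ℝ)..(2 * π), (t - π) * f (φ t (φ s p)))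
      (f p - (1 / (2 * π)) * ∫ t in (0:ℝ)..(2 * π), f (φ t p)) 0 := by
  set g : ℝ → ℝ := fun t => f (φ t p) with hg_def
  have hg : Continuous g := hf p
  have hgper : Function.Periodic g (2 * π) := fun t => by
    simp only [hg_def, hper]
  set h : ℝ → ℝ := fun u => (u - π) * g u with hh_def
  have hh : Continuous h := (continuous_id.sub continuous_const).mul hg
  set I : ℝ := ∫ u in (0:ℝ)..(2 * π), g u with hI_def
  set G : ℝ → ℝ := fun x => ∫ u in (0:ℝ)..x, h u with hG_def
  -- rewrite the function
  have key : (fun s : ℝ => (1 / (2 * π)) * ∫ t in (0:ℝ)..(2 * π), (t - π) * f (φ t (φ s p)))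
      = fun s : ℝ => (1 / (2 * π)) * ((G (2 * π + s) - G s) - s * I) := by
    funext s
    congr 1
    have h1 : ∀ t : ℝ, f (φ t (φ s p)) = g (t + s) := fun t => by
      rw [hg_def]; simp only [← hadd]
    have h2 : (∫ t in (0:ℝ)..(2 * π), (t - π) * f (φ t (φ s p)))
        = ∫ t in (0:ℝ)..(2 * π), ((t + s) - s - π) * g (t + s) := by
      refine intervalIntegral.integral_congr fun t _ => ?_
      rw [h1 t]; ring_nf
    rw [h2]
    have h3 : (∫ t in (0:ℝ)..(2 * π), ((t + s) - s - π) * g (t + s))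
        = ∫ u in (0 + s)..(2 * π + s), (u - s - π) * g u := by
      exact intervalIntegral.integral_comp_add_right (fun u => (u - s - π) * g u) s
    rw [h3, zero_add]
    have h4 : (∫ u in s..(2 * π + s), (u - s - π) * g u)
        = (∫ u in s..(2 * π + s), h u) - s * ∫ u in s..(2 * π + s), g u := by
      rw [← intervalIntegral.integral_const_mul, ← intervalIntegral.integral_sub
        (hh.intervalIntegrable _ _) ((show Continuous fun u => s * g u from continuous_const.mul hg).intervalIntegrable _ _)]
      refine intervalIntegral.integral_congr fun u _ => ?_
      simp only [hh_def]; ring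
    rw [h4]
    have h5 : (∫ u in s..(2 * π + s), g u) = I := by
      rw [hI_def]
      have := hgper.intervalIntegral_add_eq s 0
      rwa [zero_add, add_comm s (2 * π)] at this
    have h6 : (∫ u in s..(2 * π + s), h u) = G (2 * π + s) - G s := by
      rw [hG_def]
      rw [intervalIntegral.integral_interval_sub_left (hh.intervalIntegrable _ _)
        (hh.intervalIntegrable _ _)]
    rw [h5, h6]
  rw [key]
  -- derivative computation
  have hG' : ∀ x : ℝ, HasDerivAt G (h x) x := fun x =>
    intervalIntegral.integral_hasDerivAt_right (hh.intervalIntegrable _ _)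
      (hh.stronglyMeasurableAtFilter _ _) hh.continuousAt
  have d1 : HasDerivAt (fun s : ℝ => G (2 * π + s)) (h (2 * π)) 0 := by
    have : HasDerivAt (fun s : ℝ => G (2 * π + s)) (h (2 * π + 0) * 1) 0 :=
      (hG' (2 * π + 0)).comp 0 ((hasDerivAt_id 0).const_add (2 * π))
    simpa using this
  have d2 : HasDerivAt (fun s : ℝ => s * I) I 0 := by
    simpa using (hasDerivAt_id (0:ℝ)).mul_const I
  have d3 : HasDerivAt (fun s : ℝ => (1 / (2 * π)) * ((G (2 * π + s) - G s) - s * I))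
      ((1 / (2 * π)) * ((h (2 * π) - h 0) - I)) 0 :=
    (((d1.sub (hG' 0)).sub d2).const_mul _)
  have hval : (1 / (2 * π)) * ((h (2 * π) - h 0) - I) = f p - (1 / (2 * π)) * I := by
    have hg2 : g (2 * π) = g 0 := by
      have := hgper 0; rwa [zero_add] at this
    have hg0 : g 0 = f p := by rw [hg_def]; simp [h0]
    simp only [hh_def, hg2, hg0]
    have hπ : (2 * π) ≠ 0 := by positivity
    field_simp
    ring
  rw [hI_def] at hval
  rw [← hval]
  exact d3
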